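/- Let 𝔫 be a finite-dimensional real 2-step nilpotent Lie algebra with BCH group law ∘ and dilations δ_t. Let d be a metric on 𝔫 that is left-invariant, homogeneous, and proper, and let ‖·‖_Z be a norm on ⁅𝔫, 𝔫⁆. Set K₁ := sup{‖(−x) ∘ y‖_Z : d(0, x) ≤ 1, d(0, y) ≤ 1, (−x) ∘ y ∈ ⁅𝔫, 𝔫⁆}. Then K₁ is finite, and for every r ≥ 1: sup{‖(−x) ∘ y‖_Z : d(0, x) ≤ r, d(0, y) ≤ r, (−x) ∘ y ∈ ⁅𝔫, 𝔫⁆} = K₁ · r². -/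

import Mathlib

noncomputable section

/-- The Baker–Campbell–Hausdorff group law on a 2-step nilpotent Lie algebra. -/
def bch {𝔫 : Type*} [LieRing 𝔫] [LieAlgebra ℝ 𝔫] (x y : 𝔫) : 𝔫 :=
  x + y + (1 / 2 : ℝ) • ⁅x, y⁆

/-- The derived subalgebra ⁅𝔫, 𝔫⁆, as a linear subspace: the span of all brackets. -/
def derivedSubalg (𝔫 : Type*) [LieRing 𝔫] [LieAlgebra ℝ 𝔫] : Submodule ℝ 𝔫 :=
  Submodule.span ℝ {z : 𝔫 | ∃ x y : 𝔫, ⁅x, y⁆ = z}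

/-- The dilation `δ_t` associated to the projection `π` onto the complement `V∞`:
`δ_t(X + Y) = tX + t²Y` for `X ∈ V∞`, `Y ∈ ⁅𝔫, 𝔫⁆`. -/
def dil {𝔫 : Type*} [LieRing 𝔫] [LieAlgebra ℝ 𝔫] (π : 𝔫 →ₗ[ℝ] 𝔫) (t : ℝ) (x : 𝔫) : 𝔫 :=
  t • π x + t ^ 2 • (x - π x)

/-- `d` is a metric, given as a two-variable distance function. -/
structure IsMetricFun {X : Type*} (d : X → X → ℝ) : Prop where
  refl : ∀ x, d x x = 0
  eq_of_dist_eq_zero : ∀ x y, d x y = 0 → x = y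
  symm : ∀ x y, d x y = d y x
  triangle : ∀ x y z, d x z ≤ d x y + d y z

/-- `f` is a norm on the subspace `W`. -/
structure IsNormOn {𝔫 : Type*} [AddCommGroup 𝔫] [Module ℝ 𝔫]
    (W : Submodule ℝ 𝔫) (f : 𝔫 → ℝ) : Prop where
  nonneg : ∀ x ∈ W, 0 ≤ f x
  eq_zero : ∀ x ∈ W, f x = 0 → x = 0
  smul : ∀ (c : ℝ), ∀ x ∈ W, f (c • x) = |c| * f x
  add_le : ∀ x ∈ W, ∀ y ∈ W, f (x + y) ≤ f x + f y

section Aux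

variable {𝔫 : Type*} [LieRing 𝔫] [LieAlgebra ℝ 𝔫]

lemma aux_lie_mem (x y : 𝔫) : ⁅x, y⁆ ∈ derivedSubalg 𝔫 :=
  Submodule.subset_span ⟨x, y, rfl⟩

lemma aux_central (h2 : ∀ x y z : 𝔫, ⁅⁅x, y⁆, z⁆ = 0) :
    ∀ z ∈ derivedSubalg 𝔫, ∀ w : 𝔫, ⁅z, w⁆ = 0 := by
  intro z hz w
  induction hz using Submodule.span_induction with
  | mem x hx => obtain ⟨a, b, rfl⟩ := hx; exact h2 a b w
  | zero => simp
  | add x y _ _ hx hy => rw [add_lie, hx, hy, add_zero]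
  | smul c x _ hx => rw [smul_lie, hx, smul_zero]

lemma aux_central' (h2 : ∀ x y z : 𝔫, ⁅⁅x, y⁆, z⁆ = 0) :
    ∀ z ∈ derivedSubalg 𝔫, ∀ w : 𝔫, ⁅w, z⁆ = 0 := by
  intro z hz w
  rw [← lie_skew, aux_central h2 z hz w, neg_zero]

variable (π : 𝔫 →ₗ[ℝ] 𝔫)

lemma aux_sub_pi_mem {V : Submodule ℝ 𝔫} (hV : IsCompl V (derivedSubalg 𝔫))
    (hπid : ∀ v ∈ V, π v = v) (hπker : ∀ z ∈ derivedSubalg 𝔫, π z = 0) (x : 𝔫) :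
    x - π x ∈ derivedSubalg 𝔫 := by
  have hx : x ∈ V ⊔ derivedSubalg 𝔫 := by
    rw [hV.sup_eq_top]; trivial
  obtain ⟨v, hv, w, hw, rfl⟩ := Submodule.mem_sup.mp hx
  have hπ : π (v + w) = v := by rw [map_add, hπid v hv, hπker w hw, add_zero]
  rw [hπ]
  simpa using hw

lemma aux_dil_add (t : ℝ) (x y : 𝔫) :
    dil π t (x + y) = dil π t x + dil π t y := by
  simp only [dil, map_add]
  module

lemma aux_dil_neg (t : ℝ) (x : 𝔫) : dil π t (-x) = -dil π t x := by
  simp only [dil, map_neg]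
  module

lemma aux_dil_smul (t c : ℝ) (x : 𝔫) : dil π t (c • x) = c • dil π t x := by
  simp only [dil, map_smul]
  module

lemma aux_dil_zero (t : ℝ) : dil π t (0 : 𝔫) = 0 := by
  simp [dil]

lemma aux_dil_central (hπker : ∀ z ∈ derivedSubalg 𝔫, π z = 0) (t : ℝ)
    {z : 𝔫} (hz : z ∈ derivedSubalg 𝔫) : dil π t z = t ^ 2 • z := by
  simp [dil, hπker z hz]

lemma aux_dil_lie (h2 : ∀ x y z : 𝔫, ⁅⁅x, y⁆, z⁆ = 0)
    {V : Submodule ℝ 𝔫} (hV : IsCompl V (derivedSubalg 𝔫))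
    (hπmem : ∀ x : 𝔫, π x ∈ V)
    (hπid : ∀ v ∈ V, π v = v) (hπker : ∀ z ∈ derivedSubalg 𝔫, π z = 0)
    (t : ℝ) (x y : 𝔫) : ⁅dil π t x, dil π t y⁆ = t ^ 2 • ⁅x, y⁆ := by
  have hx := aux_sub_pi_mem π hV hπid hπker x
  have hy := aux_sub_pi_mem π hV hπid hπker y
  have key : ∀ a b : 𝔫, ⁅a, b⁆ = ⁅π a, π b⁆ := by
    intro a b
    have ha := aux_sub_pi_mem π hV hπid hπker a
    have hb := aux_sub_pi_mem π hV hπid hπker b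
    have h1 : a = π a + (a - π a) := by abel
    conv_lhs => rw [h1]
    rw [add_lie, aux_central h2 _ ha b, add_zero]
    have h2' : b = π b + (b - π b) := by abel
    conv_lhs => rw [h2']
    rw [lie_add, aux_central' h2 _ hb (π a), add_zero]
  rw [key (dil π t x) (dil π t y)]
  have hπx : π (dil π t x) = t • π x := by
    simp [dil, map_smul, hπker _ hx, hπid _ (hπmem x)]
  have hπy : π (dil π t y) = t • π y := by
    simp [dil, map_smul, hπker _ hy, hπid _ (hπmem y)]
  rw [hπx, hπy, smul_lie, lie_smul, smul_smul, ← key x y, ← pow_two]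

lemma aux_dil_bch (h2 : ∀ x y z : 𝔫, ⁅⁅x, y⁆, z⁆ = 0)
    {V : Submodule ℝ 𝔫} (hV : IsCompl V (derivedSubalg 𝔫))
    (hπmem : ∀ x : 𝔫, π x ∈ V)
    (hπid : ∀ v ∈ V, π v = v) (hπker : ∀ z ∈ derivedSubalg 𝔫, π z = 0)
    (t : ℝ) (x y : 𝔫) :
    dil π t (bch (-x) y) = bch (-(dil π t x)) (dil π t y) := by
  unfold bch
  rw [aux_dil_add, aux_dil_add, aux_dil_smul, aux_dil_neg,
    aux_dil_central π hπker t (aux_lie_mem (-x) y),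
    ← aux_dil_neg π t x, aux_dil_lie π h2 hV hπmem hπid hπker, aux_dil_neg]

lemma aux_nZ_zero {W : Submodule ℝ 𝔫} {nZ : 𝔫 → ℝ} (hnZ : IsNormOn W nZ) :
    nZ 0 = 0 := by
  have := hnZ.smul 0 0 W.zero_mem
  simpa using this

lemma aux_nZ_sum {W : Submodule ℝ 𝔫} {nZ : 𝔫 → ℝ} (hnZ : IsNormOn W nZ)
    {ι : Type*} (s : Finset ι) (g : ι → 𝔫) (hg : ∀ i ∈ s, g i ∈ W) :
    nZ (∑ i ∈ s, g i) ≤ ∑ i ∈ s, nZ (g i) := by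
  classical
  induction s using Finset.induction with
  | empty => simp [aux_nZ_zero hnZ]
  | @insert a s' hni ih =>
    rw [Finset.sum_insert hni, Finset.sum_insert hni]
    have h1 : g a ∈ W := hg a (Finset.mem_insert_self a s')
    have h2 : ∑ i ∈ s', g i ∈ W :=
      Submodule.sum_mem W fun i hi => hg i (Finset.mem_insert_of_mem hi)
    calc nZ (g a + ∑ i ∈ s', g i) ≤ nZ (g a) + nZ (∑ i ∈ s', g i) :=
          hnZ.add_le _ h1 _ h2
      _ ≤ nZ (g a) + ∑ i ∈ s', nZ (g i) := by
          have := ih fun i hi => hg i (Finset.mem_insert_of_mem hi)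
          linarith

lemma aux_continuous_lie [FiniteDimensional ℝ 𝔫] [TopologicalSpace 𝔫]
    [IsTopologicalAddGroup 𝔫] [ContinuousSMul ℝ 𝔫] [T2Space 𝔫] :
    Continuous fun p : 𝔫 × 𝔫 => ⁅p.1, p.2⁆ := by
  classical
  let b := Module.finBasis ℝ 𝔫
  have hsum_lie : ∀ {ι : Type} (s : Finset ι) (f : ι → 𝔫) (y : 𝔫),
      ⁅∑ i ∈ s, f i, y⁆ = ∑ i ∈ s, ⁅f i, y⁆ := fun s f y =>
    sum_lie s f y
  have hlie_sum : ∀ {ι : Type} (s : Finset ι) (f : ι → 𝔫) (y : 𝔫),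
      ⁅y, ∑ i ∈ s, f i⁆ = ∑ i ∈ s, ⁅y, f i⁆ := fun s f y =>
    map_sum (LieAlgebra.ad ℝ 𝔫 y) f s
  have hrepr : ∀ x y : 𝔫,
      ⁅x, y⁆ = ∑ i, ∑ j, (b.repr x i * b.repr y j) • ⁅b i, b j⁆ := by
    intro x y
    conv_lhs => rw [← b.sum_repr x, ← b.sum_repr y]
    rw [hsum_lie]
    refine Finset.sum_congr rfl fun i _ => ?_
    rw [hlie_sum]
    refine Finset.sum_congr rfl fun j _ => ?_
    rw [smul_lie, lie_smul, smul_smul]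
  have heq : (fun p : 𝔫 × 𝔫 => ⁅p.1, p.2⁆) =
      fun p : 𝔫 × 𝔫 => ∑ i, ∑ j, (b.repr p.1 i * b.repr p.2 j) • ⁅b i, b j⁆ := by
    funext p; exact hrepr p.1 p.2
  rw [heq]
  refine continuous_finset_sum _ fun i _ => continuous_finset_sum _ fun j _ => ?_
  have hci : Continuous fun x : 𝔫 => b.repr x i :=
    (b.coord i).continuous_of_finiteDimensional
  have hcj : Continuous fun x : 𝔫 => b.repr x j :=
    (b.coord j).continuous_of_finiteDimensional
  exact ((hci.comp continuous_fst).mul (hcj.comp continuous_snd)).smul continuous_const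

end Aux

theorem sup_central_defect_scaling {𝔫 : Type*} [LieRing 𝔫] [LieAlgebra ℝ 𝔫]
    [FiniteDimensional ℝ 𝔫] [TopologicalSpace 𝔫] [IsTopologicalAddGroup 𝔫]
    [ContinuousSMul ℝ 𝔫] [T2Space 𝔫]
    (h2 : ∀ x y z : 𝔫, ⁅⁅x, y⁆, z⁆ = 0)
    (V : Submodule ℝ 𝔫) (hV : IsCompl V (derivedSubalg 𝔫))
    (π : 𝔫 →ₗ[ℝ] 𝔫) (hπmem : ∀ x : 𝔫, π x ∈ V) (hπid : ∀ v ∈ V, π v = v)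
    (hπker : ∀ z ∈ derivedSubalg 𝔫, π z = 0)
    (d : 𝔫 → 𝔫 → ℝ) (hd : IsMetricFun d)
    (hdLeft : ∀ g x y : 𝔫, d (bch g x) (bch g y) = d x y)
    (hdHom : ∀ t : ℝ, 0 < t → ∀ x y : 𝔫, d (dil π t x) (dil π t y) = t * d x y)
    (hdProper : ∀ (c : 𝔫) (R : ℝ), IsCompact {x : 𝔫 | d c x ≤ R})
    (nZ : 𝔫 → ℝ) (hnZ : IsNormOn (derivedSubalg 𝔫) nZ) :
    BddAbove {a : ℝ | ∃ x y : 𝔫, d 0 x ≤ 1 ∧ d 0 y ≤ 1 ∧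
        bch (-x) y ∈ derivedSubalg 𝔫 ∧ a = nZ (bch (-x) y)} ∧
    ∀ r : ℝ, 1 ≤ r →
      sSup {a : ℝ | ∃ x y : 𝔫, d 0 x ≤ r ∧ d 0 y ≤ r ∧
          bch (-x) y ∈ derivedSubalg 𝔫 ∧ a = nZ (bch (-x) y)} =
        sSup {a : ℝ | ∃ x y : 𝔫, d 0 x ≤ 1 ∧ d 0 y ≤ 1 ∧
            bch (-x) y ∈ derivedSubalg 𝔫 ∧ a = nZ (bch (-x) y)} * r ^ 2 := by
  classical
  set W := derivedSubalg 𝔫 with hW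
  set S : ℝ → Set ℝ := fun r => {a : ℝ | ∃ x y : 𝔫, d 0 x ≤ r ∧ d 0 y ≤ r ∧
      bch (-x) y ∈ derivedSubalg 𝔫 ∧ a = nZ (bch (-x) y)} with hS
  -- a continuous majorant of nZ on W
  have hQmem : ∀ x : 𝔫, x - π x ∈ W := aux_sub_pi_mem π hV hπid hπker
  let Q : 𝔫 →ₗ[ℝ] W := (LinearMap.id - π).codRestrict W (by
    intro x; simpa using hQmem x)
  let bW := Module.finBasis ℝ W
  let M : 𝔫 → ℝ := fun z => ∑ j, |bW.repr (Q z) j| * nZ (bW j)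
  have hMcont : Continuous M := by
    refine continuous_finset_sum _ fun j _ => ?_
    have : Continuous fun z : 𝔫 => bW.repr (Q z) j :=
      ((bW.coord j).comp Q).continuous_of_finiteDimensional
    exact (this.abs).mul continuous_const
  have hMle : ∀ z ∈ W, nZ z ≤ M z := by
    intro z hz
    have hQz : Q z = ⟨z, hz⟩ := by
      apply Subtype.ext
      simp [Q, LinearMap.codRestrict, hπker z hz]
    have hzrepr : z = ∑ j, bW.repr (Q z) j • (bW j : 𝔫) := by
      conv_lhs => rw [show z = ((⟨z, hz⟩ : W) : 𝔫) from rfl, ← bW.sum_repr ⟨z, hz⟩]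
      rw [hQz]
      push_cast
      rfl
    calc nZ z = nZ (∑ j, bW.repr (Q z) j • (bW j : 𝔫)) := by rw [← hzrepr]
      _ ≤ ∑ j, nZ (bW.repr (Q z) j • (bW j : 𝔫)) :=
          aux_nZ_sum hnZ _ _ fun j _ => W.smul_mem _ (bW j).2
      _ = ∑ j, |bW.repr (Q z) j| * nZ (bW j) :=
          Finset.sum_congr rfl fun j _ => hnZ.smul _ _ (bW j).2
      _ = M z := rfl
  -- boundedness of S 1
  have hBdd : BddAbove (S 1) := by
    have hBcompact : IsCompact ({x : 𝔫 | d 0 x ≤ 1} ×ˢ {x : 𝔫 | d 0 x ≤ 1}) :=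
      (hdProper 0 1).prod (hdProper 0 1)
    have hFcont : Continuous fun p : 𝔫 × 𝔫 => M (bch (-p.1) p.2) := by
      have hb : Continuous fun p : 𝔫 × 𝔫 => bch (-p.1) p.2 := by
        unfold bch
        have h1 : Continuous fun p : 𝔫 × 𝔫 => (-p.1, p.2) :=
          (continuous_fst.neg).prodMk continuous_snd
        exact (((continuous_fst.neg).add continuous_snd).add
          (continuous_const.smul (aux_continuous_lie.comp h1)))
      exact hMcont.comp hb
    obtain ⟨C, hC⟩ := (hBcompact.image hFcont).bddAbove
    refine ⟨C, ?_⟩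
    rintro a ⟨x, y, hx, hy, hmem, rfl⟩
    have : M (bch (-x) y) ≤ C := hC ⟨(x, y), ⟨hx, hy⟩, rfl⟩
    exact le_trans (hMle _ hmem) this
  refine ⟨hBdd, ?_⟩
  -- nonemptiness of S 1
  have hne : (S 1).Nonempty := by
    refine ⟨nZ (bch (-(0:𝔫)) 0), 0, 0, ?_, ?_, ?_, rfl⟩
    · rw [hd.refl]; norm_num
    · rw [hd.refl]; norm_num
    · show bch (-(0:𝔫)) 0 ∈ W
      have : bch (-(0:𝔫)) 0 = 0 := by simp [bch]
      rw [this]; exact W.zero_mem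
  -- scaling
  intro r hr
  have hr0 : 0 < r := lt_of_lt_of_le one_pos hr
  have hd0 : ∀ (t : ℝ), 0 < t → ∀ x : 𝔫, d 0 (dil π t x) = t * d 0 x := by
    intro t ht x
    conv_lhs => rw [show (0 : 𝔫) = dil π t 0 from (aux_dil_zero π t).symm]
    exact hdHom t ht 0 x
  have himage : S r = (fun a => r ^ 2 * a) '' (S 1) := by
    ext a
    constructor
    · rintro ⟨x, y, hx, hy, hmem, rfl⟩
      have hrinv : (0:ℝ) < r⁻¹ := inv_pos.mpr hr0
      refine ⟨(r⁻¹) ^ 2 * nZ (bch (-x) y), ⟨dil π r⁻¹ x, dil π r⁻¹ y, ?_, ?_, ?_, ?_⟩, ?_⟩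
      · rw [hd0 r⁻¹ hrinv x]
        calc r⁻¹ * d 0 x ≤ r⁻¹ * r := by
              exact mul_le_mul_of_nonneg_left hx (le_of_lt hrinv)
          _ = 1 := inv_mul_cancel₀ (ne_of_gt hr0)
      · rw [hd0 r⁻¹ hrinv y]
        calc r⁻¹ * d 0 y ≤ r⁻¹ * r := mul_le_mul_of_nonneg_left hy (le_of_lt hrinv)
          _ = 1 := inv_mul_cancel₀ (ne_of_gt hr0)
      · rw [← aux_dil_bch π h2 hV hπmem hπid hπker,
          aux_dil_central π hπker _ hmem]
        exact W.smul_mem _ hmem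
      · rw [← aux_dil_bch π h2 hV hπmem hπid hπker,
          aux_dil_central π hπker _ hmem, hnZ.smul _ _ hmem]
        congr 1
        rw [abs_of_pos (pow_pos hrinv 2)]
      · show r ^ 2 * (r⁻¹ ^ 2 * nZ (bch (-x) y)) = nZ (bch (-x) y)
        rw [← mul_assoc]
        have : r ^ 2 * r⁻¹ ^ 2 = 1 := by
          field_simp
        rw [this, one_mul]
    · rintro ⟨b, ⟨x, y, hx, hy, hmem, rfl⟩, rfl⟩
      refine ⟨dil π r x, dil π r y, ?_, ?_, ?_, ?_⟩
      · rw [hd0 r hr0 x]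
        calc r * d 0 x ≤ r * 1 := mul_le_mul_of_nonneg_left hx (le_of_lt hr0)
          _ = r := mul_one r
      · rw [hd0 r hr0 y]
        calc r * d 0 y ≤ r * 1 := mul_le_mul_of_nonneg_left hy (le_of_lt hr0)
          _ = r := mul_one r
      · rw [← aux_dil_bch π h2 hV hπmem hπid hπker,
          aux_dil_central π hπker _ hmem]
        exact W.smul_mem _ hmem
      · rw [← aux_dil_bch π h2 hV hπmem hπid hπker,
          aux_dil_central π hπker _ hmem, hnZ.smul _ _ hmem,
          abs_of_pos (pow_pos hr0 2)]
  have hlub : IsLUB (S 1) (sSup (S 1)) := isLUB_csSup hne hBdd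
  have hlub2 : IsLUB ((fun a => r ^ 2 * a) '' (S 1)) (r ^ 2 * sSup (S 1)) :=
    (OrderIso.mulLeft₀ (r ^ 2) (pow_pos hr0 2)).isLUB_image'.mpr hlub
  show sSup (S r) = sSup (S 1) * r ^ 2
  rw [himage, hlub2.csSup_eq (hne.image _), mul_comm]
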